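/- Let a₁,...,a_n be a permutation of {1,...,n} viewed as a cycle with code 1(0)^{λ₁}1(0)^{λ₂}...1(0)^{λ_x} (x ones, y zeros, λ₁+...+λ_x = y). Call an index i ∈ [1,x] (K,M,N)-lucky if λ_{i+1} + ... + λ_{i+K} ≥ y - M and the last term of the maximal decreasing block encoded by the part (0)^{λ_i} is at most N. If there exists a (K,M,N)-lucky index, then the permutation a₁,...,a_n is a subsequence of the cycle (1,2,...,n) repeated M times, followed by (1,2,...,N), followed by (n,...,2,1) repeated K times. -/

import Mathlib

/-- The cyclic code of a cycle `a₁,...,aₙ`: entry `i` is `H(a_{i+1} - a_i)`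
(indices mod `n`), where `H` is the Heaviside step function. -/
def cycCode (a : List ℕ) : List ℕ :=
  List.zipWith (fun u v => if v ≤ u then 1 else 0) (a.rotate 1) a

/-- The cyclic 0-1 sequence `1(0)^{λ₀} 1(0)^{λ₁} ⋯ 1(0)^{λ_{x-1}}`. -/
def codeOf (lam : ℕ → ℕ) (x : ℕ) : List ℕ :=
  ((List.range x).map (fun j => 1 :: List.replicate (lam j) 0)).flatten

namespace L2
open List

def linCode (l : List ℕ) : List ℕ :=
  List.zipWith (fun u v => if v ≤ u then 1 else 0) l.tail l

@[simp] lemma linCode_nil : linCode [] = [] := rfl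
@[simp] lemma linCode_singleton (a : ℕ) : linCode [a] = [] := rfl
@[simp] lemma linCode_cons_cons (a b : ℕ) (l : List ℕ) :
    linCode (a :: b :: l) = (if a ≤ b then 1 else 0) :: linCode (b :: l) := rfl

@[simp] lemma length_linCode (l : List ℕ) : (linCode l).length = l.length - 1 := by
  simp [linCode, length_zipWith]

lemma linCode_tail (l : List ℕ) : linCode l.tail = (linCode l).tail := by
  match l with
  | [] => rfl
  | [a] => rfl
  | a :: b :: t => rfl

lemma linCode_drop (l : List ℕ) (k : ℕ) : linCode (l.drop k) = (linCode l).drop k := by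
  induction k generalizing l with
  | zero => simp
  | succ k ih =>
    rw [← tail_drop, linCode_tail, ih, tail_drop]

@[simp] lemma length_cycCode (l : List ℕ) : (cycCode l).length = l.length := by
  simp [cycCode, length_zipWith]

lemma getElem_idx_congr (l : List ℕ) {i j : ℕ} (h : i = j) (hi : i < l.length) :
    l[i] = l[j]'(h ▸ hi) := by subst h; rfl

lemma cycCode_rotate (l : List ℕ) (k : ℕ) : cycCode (l.rotate k) = (cycCode l).rotate k := by
  rcases eq_or_ne l [] with rfl | hl
  · simp [cycCode]
  have hn : 0 < l.length := length_pos_iff.2 hl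
  apply List.ext_getElem
  · simp
  intro i h1 h2
  simp only [cycCode, getElem_rotate, getElem_zipWith, rotate_rotate, length_zipWith,
    length_rotate, min_self]
  congr 2
  apply getElem_idx_congr
  rw [Nat.mod_add_mod, Nat.add_assoc]

lemma codeOf_eq (μ : ℕ → ℕ) (x : ℕ) :
    codeOf μ x = ((List.range x).map (fun j => 1 :: List.replicate (μ j) 0)).flatten := rfl

@[simp] lemma codeOf_zero (μ : ℕ → ℕ) : codeOf μ 0 = [] := rfl

lemma codeOf_succ (μ : ℕ → ℕ) (t : ℕ) :
    codeOf μ (t + 1) = 1 :: (List.replicate (μ 0) 0 ++ codeOf (fun j => μ (j + 1)) t) := by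
  rw [codeOf_eq, codeOf_eq, range_succ_eq_map, map_cons, flatten_cons, map_map]
  simp [Function.comp_def, Nat.succ_eq_add_one]

lemma codeOf_congr {f g : ℕ → ℕ} {t : ℕ} (h : ∀ j < t, f j = g j) :
    codeOf f t = codeOf g t := by
  rw [codeOf_eq, codeOf_eq]
  congr 1
  apply List.map_congr_left
  intro j hj
  rw [h j (List.mem_range.1 hj)]

lemma codeOf_add (μ : ℕ → ℕ) (s t : ℕ) :
    codeOf μ (s + t) = codeOf μ s ++ codeOf (fun j => μ (s + j)) t := by
  induction s generalizing μ with
  | zero => simp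
  | succ s ih =>
    have h1 : s + 1 + t = (s + t) + 1 := by omega
    rw [h1, codeOf_succ, codeOf_succ, ih (fun j => μ (j + 1))]
    simp only [cons_append, append_assoc]
    congr 2
    apply congrArg
    apply codeOf_congr
    intro j _
    congr 1
    omega

lemma count_codeOf (μ : ℕ → ℕ) (t : ℕ) :
    (codeOf μ t).count 0 = ∑ j ∈ Finset.range t, μ j := by
  induction t generalizing μ with
  | zero => simp
  | succ t ih =>
    rw [codeOf_succ, Finset.sum_range_succ']
    simp [List.count_cons, List.count_append, ih]
    omega

lemma length_codeOf (μ : ℕ → ℕ) (t : ℕ) :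
    (codeOf μ t).length = t + ∑ j ∈ Finset.range t, μ j := by
  induction t generalizing μ with
  | zero => simp
  | succ t ih =>
    rw [codeOf_succ, Finset.sum_range_succ']
    simp [ih]
    omega

lemma rotate_append_length (A B : List ℕ) : (A ++ B).rotate A.length = B ++ A := by
  rw [rotate_eq_drop_append_take (by simp), drop_left, take_left]
lemma chain_lt_sublist_range' : ∀ (l : List ℕ) (s len : ℕ), Chain' (· < ·) l →
    (∀ v ∈ l, s ≤ v ∧ v < s + len) → l <+ range' s len := by
  intro l
  induction l with
  | nil => intro s len _ _; exact nil_sublist _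
  | cons a t ih =>
    intro s len hc hb
    obtain ⟨hsa, halen⟩ := hb a mem_cons_self
    have hsplit : range' s len = range' s (a - s) ++ range' a (len - (a - s)) := by
      have h1 : s + 1 * (a - s) = a := by omega
      have h2 := List.range'_append (s := s) (m := a - s) (n := len - (a - s)) (step := 1)
      rw [h1] at h2
      rw [h2]
      congr 1
      omega
    rw [hsplit]
    have hlen2 : len - (a - s) = (len - (a - s) - 1) + 1 := by omega
    have hcons : range' a (len - (a - s)) = a :: range' (a + 1) (len - (a - s) - 1) := by
      conv_lhs => rw [hlen2]
      rw [List.range'_succ]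
    have hat : ∀ v ∈ t, a < v := by
      have hp := (List.isChain_iff_pairwise.mp hc)
      exact (List.pairwise_cons.mp hp).1
    have htail : t <+ range' (a + 1) (len - (a - s) - 1) := by
      apply ih _ _ (List.IsChain.tail hc)
      intro v hv
      have := hb v (mem_cons_of_mem _ hv)
      have := hat v hv
      omega
    refine Sublist.trans ?_ (List.sublist_append_right _ _)
    rw [hcons]
    exact htail.cons₂ a

lemma chain_gt_sublist_rev (l : List ℕ) (n : ℕ) (hc : Chain' (· > ·) l)
    (hb : ∀ v ∈ l, 1 ≤ v ∧ v ≤ n) : l <+ (range' 1 n).reverse := by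
  have h1 : l.reverse <+ range' 1 n := by
    apply chain_lt_sublist_range'
    · rw [Chain', isChain_reverse]
      exact hc
    · intro v hv
      rw [mem_reverse] at hv
      have := hb v hv
      omega
  have h2 := h1.reverse
  rwa [reverse_reverse] at h2

lemma run_of_code : ∀ (k : ℕ) (l rest : List ℕ), linCode l = List.replicate k 0 ++ rest →
    Chain' (· > ·) (l.take (k + 1)) ∧ linCode (l.drop k) = rest := by
  intro k
  induction k with
  | zero =>
    intro l rest h
    refine ⟨?_, by simpa using h⟩
    match l with
    | [] => simp [Chain']
    | a :: t => simp [Chain']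
  | succ k ih =>
    intro l rest h
    match l, h with
    | [], h => simp at h
    | [a], h => simp at h
    | a :: b :: t', h =>
      rw [linCode_cons_cons, replicate_succ, cons_append] at h
      injection h with h1 h2
      have hba : b < a := by
        by_contra hle
        have : a ≤ b := by omega
        simp [this] at h1
      obtain ⟨hch, hdr⟩ := ih (b :: t') rest h2
      constructor
      · have htake : (a :: b :: t').take (k + 1 + 1) = a :: ((b :: t').take (k + 1)) := rfl
        rw [htake]
        refine List.isChain_cons.mpr ⟨?_, hch⟩
        intro y hy
        have hhd : ((b :: t').take (k + 1)).head? = some b := rfl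
        rw [hhd] at hy
        simp at hy
        omega
      · simpa using hdr

lemma chunks_sublist (n : ℕ) : ∀ (t : ℕ) (μ : ℕ → ℕ) (e rest : List ℕ),
    (∀ v ∈ e, 1 ≤ v ∧ v ≤ n) → linCode e = codeOf μ t ++ rest →
    e.tail.take (t + ∑ j ∈ Finset.range t, μ j) <+
      (List.replicate t (List.range' 1 n).reverse).flatten := by
  intro t
  induction t with
  | zero => intro μ e rest _ _; simp
  | succ t ih =>
    intro μ e rest hb h
    rw [codeOf_succ, cons_append, append_assoc] at h
    match e, h with
    | [], h => simp at h
    | [a], h => simp at h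
    | a :: b :: t', h =>
      rw [linCode_cons_cons] at h
      injection h with h1 h2
      obtain ⟨hch, hdr⟩ := run_of_code (μ 0) (b :: t') _ h2
      have hbnds : ∀ v ∈ (b :: t').drop (μ 0), 1 ≤ v ∧ v ≤ n := fun v hv =>
        hb v (mem_cons_of_mem _ ((drop_sublist _ _).mem hv))
      have IH := ih (fun j => μ (j + 1)) _ rest hbnds hdr
      rw [tail_drop] at IH
      have hsum : (t + 1) + ∑ j ∈ Finset.range (t + 1), μ j
          = (μ 0 + 1) + (t + ∑ j ∈ Finset.range t, μ (j + 1)) := by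
        rw [Finset.sum_range_succ']; omega
      show (b :: t').take ((t + 1) + ∑ j ∈ Finset.range (t + 1), μ j) <+ _
      rw [hsum, take_add, replicate_succ, flatten_cons]
      apply Sublist.append
      · apply chain_gt_sublist_rev _ n hch
        intro v hv
        exact hb v (mem_cons_of_mem _ ((take_sublist _ _).mem hv))
      · exact IH
lemma chain_lt_of_code : ∀ {l : List ℕ}, Chain' (· ≠ ·) l →
    (linCode l).count 0 = 0 → Chain' (· < ·) l := by
  intro l
  induction l with
  | nil => intro _ _; simp [Chain']
  | cons a t ih =>
    intro hne h0
    match t, hne, h0 with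
    | [], _, _ => simp [Chain']
    | b :: t', hne, h0 =>
      rw [linCode_cons_cons] at h0
      have hab : a ≤ b := by
        by_contra h
        simp [h, List.count_cons] at h0
      obtain ⟨hne1, hne2⟩ := List.isChain_cons_cons.mp hne
      refine List.isChain_cons_cons.mpr ⟨lt_of_le_of_ne hab hne1, ih hne2 ?_⟩
      simpa [hab, List.count_cons] using h0

lemma le_getLast_of_chain_lt : ∀ (l : List ℕ), Chain' (· < ·) l →
    ∀ v ∈ l, ∀ w, l.getLast? = some w → v ≤ w := by
  intro l
  induction l with
  | nil => intro _ v hv; simp at hv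
  | cons a t ih =>
    intro hc v hv w hw
    cases t with
    | nil =>
      simp at hv hw
      omega
    | cons b t' =>
      rw [List.getLast?_cons_cons] at hw
      obtain ⟨h1, h2⟩ := List.isChain_cons_cons.mp hc
      rcases List.mem_cons.mp hv with rfl | hv'
      · have := ih h2 b mem_cons_self w hw
        omega
      · exact ih h2 v hv' w hw

lemma inc_sublist_N (N : ℕ) (l : List ℕ) (h1 : ∀ v ∈ l, 1 ≤ v)
    (hne : Chain' (· ≠ ·) l) (h0 : (linCode l).count 0 = 0)
    (hlast : ∀ w, l.getLast? = some w → w ≤ N) : l <+ range' 1 N := by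
  have hlt := chain_lt_of_code hne h0
  apply chain_lt_sublist_range' l 1 N hlt
  intro v hv
  have hvne : l ≠ [] := ne_nil_of_mem hv
  obtain ⟨w, hw⟩ : ∃ w, l.getLast? = some w := ⟨l.getLast hvne, getLast?_eq_getLast hvne⟩
  have := le_getLast_of_chain_lt l hlt v hv w hw
  have := hlast w hw
  have := h1 v hv
  omega

lemma L5s (n N : ℕ) : ∀ (l : List ℕ) (m s : ℕ), (∀ v ∈ l, 1 ≤ v ∧ v ≤ n) →
    Chain' (· ≠ ·) l → (∀ w, l.getLast? = some w → w ≤ N) →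
    (∀ w, l.head? = some w → s ≤ w) →
    (linCode l).count 0 ≤ m + 1 →
    l <+ range' s (n + 1 - s) ++
      ((List.replicate m (range' 1 n)).flatten ++ range' 1 N) := by
  intro l
  induction l with
  | nil => intro m s _ _ _ _ _; exact nil_sublist _
  | cons a t ih =>
    intro m s hb hne hlast hhead hcount
    have hsa : s ≤ a := hhead a rfl
    obtain ⟨h1a, han⟩ := hb a mem_cons_self
    match t, hne, hlast, hcount with
    | [], _, hlast, _ =>
      have haN : a ≤ N := hlast a rfl
      have h1 : [a] <+ range' 1 N := singleton_sublist.mpr (mem_range'_1.mpr ⟨h1a, by omega⟩)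
      exact Sublist.trans (Sublist.trans h1 (sublist_append_right _ _))
        (sublist_append_right _ _)
    | b :: t', hne, hlast, hcount =>
      obtain ⟨hne1, hne2⟩ := List.isChain_cons_cons.mp hne
      have hbb := hb b (mem_cons_of_mem _ mem_cons_self)
      have hlast' : ∀ w, (b :: t').getLast? = some w → w ≤ N := by
        intro w hw
        exact hlast w (by rwa [List.getLast?_cons_cons])
      have hbsub : ∀ v ∈ b :: t', 1 ≤ v ∧ v ≤ n := fun v hv => hb v (mem_cons_of_mem _ hv)
      by_cases hab : a ≤ b
      · have hab' : a < b := lt_of_le_of_ne hab hne1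
        have hsplit : range' s (n + 1 - s)
            = range' s (a + 1 - s) ++ range' (a + 1) (n + 1 - (a + 1)) := by
          have h2 := List.range'_append (s := s) (m := a + 1 - s) (n := n + 1 - (a + 1)) (step := 1)
          rw [show s + 1 * (a + 1 - s) = a + 1 by omega] at h2
          rw [h2]
          congr 1
          omega
        rw [hsplit, append_assoc]
        have hcount' : (linCode (b :: t')).count 0 ≤ m + 1 := by
          simpa [hab, List.count_cons] using hcount
        have hrest := ih m (a + 1) hbsub hne2 hlast' (by intro w hw; simp at hw; omega) hcount'
        have hA : [a] <+ range' s (a + 1 - s) :=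
          singleton_sublist.mpr (mem_range'_1.mpr ⟨hsa, by omega⟩)
        exact Sublist.append hA hrest
      · have hba : b < a := by omega
        have hcount2 : (linCode (b :: t')).count 0 + 1 ≤ m + 1 := by
          simpa [hab, List.count_cons] using hcount
        have hA : [a] <+ range' s (n + 1 - s) :=
          singleton_sublist.mpr (mem_range'_1.mpr ⟨hsa, by omega⟩)
        by_cases h0 : (linCode (b :: t')).count 0 = 0
        · have hQ : (b :: t') <+ range' 1 N :=
            inc_sublist_N N _ (fun v hv => (hbsub v hv).1) hne2 h0 hlast'
          exact Sublist.append hA (Sublist.trans hQ (sublist_append_right _ _))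
        · obtain ⟨m', rfl⟩ : ∃ m', m = m' + 1 := ⟨m - 1, by omega⟩
          have hrest := ih m' 1 hbsub hne2 hlast' (by
            intro w hw
            simp only [head?_cons, Option.some.injEq] at hw
            subst hw
            exact hbb.1) (by omega)
          rw [replicate_succ, flatten_cons, append_assoc]
          refine Sublist.append hA ?_
          have : n + 1 - 1 = n := rfl
          rw [← this]
          exact hrest
    
lemma L5 (n N : ℕ) (l : List ℕ) (m : ℕ) (hb : ∀ v ∈ l, 1 ≤ v ∧ v ≤ n)
    (hne : Chain' (· ≠ ·) l) (hlast : ∀ w, l.getLast? = some w → w ≤ N)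
    (hcount : (linCode l).count 0 ≤ m) :
    l <+ (List.replicate m (range' 1 n)).flatten ++ range' 1 N := by
  cases m with
  | zero =>
    have h0 : (linCode l).count 0 = 0 := by omega
    have := inc_sublist_N N l (fun v hv => (hb v hv).1) hne h0 hlast
    simpa using this
  | succ m' =>
    rw [replicate_succ, flatten_cons, append_assoc]
    have := L5s n N l m' 1 hb hne hlast (by
      intro w hw
      cases l with
      | nil => simp at hw
      | cons c t =>
        simp only [head?_cons, Option.some.injEq] at hw
        exact hw ▸ (hb c mem_cons_self).1) (by omega)
    have h1 : n + 1 - 1 = n := rfl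
    rwa [h1] at this

lemma exists_sublist_rotate {u w : List ℕ} (s : ℕ) (h : u.rotate s <+ w) :
    ∃ j, u <+ w.rotate j := by
  rcases eq_or_ne u [] with rfl | hu
  · exact ⟨0, nil_sublist _⟩
  have hlen : 0 < u.length := length_pos_iff.2 hu
  rw [← rotate_mod] at h
  rw [rotate_eq_drop_append_take (le_of_lt (Nat.mod_lt _ hlen))] at h
  obtain ⟨w₁, w₂, hw, h₁, h₂⟩ := List.append_sublist_iff.mp h
  refine ⟨w₁.length, ?_⟩
  have hrot : w.rotate w₁.length = w₂ ++ w₁ := by rw [hw, rotate_append_length]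
  rw [hrot]
  calc u = u.take (s % u.length) ++ u.drop (s % u.length) := (take_append_drop _ _).symm
  _ <+ w₂ ++ w₁ := Sublist.append h₂ h₁
lemma zipWith_trunc (f : ℕ → ℕ → ℕ) : ∀ (X Y Z : List ℕ), X.length ≤ Y.length →
    List.zipWith f X (Y ++ Z) = List.zipWith f X Y := by
  intro X
  induction X with
  | nil => intro Y Z _; simp
  | cons xh xt ih =>
    intro Y Z hl
    cases Y with
    | nil => simp at hl
    | cons yh yt =>
      simp only [cons_append, zipWith_cons_cons]
      rw [ih _ _ (by simpa using hl)]

lemma linCode_concat_head (l : List ℕ) (h : l ≠ []) :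
    linCode (l ++ [l.head h]) = cycCode l := by
  obtain ⟨a, t, rfl⟩ : ∃ a t, l = a :: t := ⟨l.head h, l.tail, (cons_head_tail h).symm⟩
  simp only [head_cons]
  have hrot : (a :: t).rotate 1 = t ++ [a] := by
    rw [List.rotate_cons_succ, rotate_zero]
  rw [cycCode, hrot, linCode]
  simp only [cons_append, tail_cons]
  have : a :: (t ++ [a]) = (a :: t) ++ [a] := rfl
  rw [this, zipWith_trunc _ _ _ _ (by simp)]

lemma rotate_one_eq (l : List ℕ) (h : l ≠ []) : l.rotate 1 = l.tail ++ [l.head h] := by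
  conv_lhs => rw [← cons_head_tail h]
  rw [rotate_cons_succ, rotate_zero]
end L2

open L2 List

theorem lemma_two (n x y K M N : ℕ) (hn : 1 < n) (hx : 0 < x) (hxy : x + y = n)
    (a : List ℕ) (ha : a.Perm (List.range' 1 n))
    (lam : ℕ → ℕ) (hlam : ∑ j ∈ Finset.range x, lam j = y)
    (r : ℕ) (hcode : cycCode (a.rotate r) = codeOf lam x)
    (i : ℕ) (hix : i < x)
    -- the index `i` is `(K, M, N)`-lucky:
    (hlucky1 : y ≤ M + ∑ j ∈ Finset.range K, lam ((i + 1 + j) % x))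
    (hlucky2 : (a.rotate r).getD
        (((∑ j ∈ Finset.range i, (1 + lam j)) + lam i + 1) % n) 0 ≤ N) :
    ∃ j, a.Sublist
      (((List.replicate M (List.range' 1 n)).flatten ++ List.range' 1 N ++
        (List.replicate K (List.range' 1 n).reverse).flatten).rotate j) := by
  classical
  have hlen_a : a.length = n := by simpa using ha.length_eq
  have hlen_b : (a.rotate r).length = n := by simp [hlen_a]
  have hnodup_b : (a.rotate r).Nodup := by
    rw [List.nodup_rotate]
    exact ha.nodup_iff.mpr (List.nodup_range' (s := 1) (n := n))
  have hmem_b : ∀ v ∈ a.rotate r, 1 ≤ v ∧ v ≤ n := by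
    intro v hv
    rw [List.mem_rotate] at hv
    have h2 := ha.mem_iff.mp hv
    rw [List.mem_range'_1] at h2
    omega
  -- abbreviations
  set μ : ℕ → ℕ := (fun j => lam ((i + 1 + j) % x)) with hμdef
  set P : ℕ := ∑ j ∈ Finset.range (i + 1), (1 + lam j) with hPdef
  have hPsum : P = (i + 1) + ∑ j ∈ Finset.range (i + 1), lam j := by
    rw [hPdef, Finset.sum_add_distrib]
    simp
  have hsum_le : ∑ j ∈ Finset.range (i + 1), lam j ≤ y := by
    rw [← hlam]
    exact Finset.sum_le_sum_of_subset (Finset.range_subset_range.mpr hix)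
  have hPn : P ≤ n := by omega
  -- the rotated code
  have hrotcode : (codeOf lam x).rotate P = codeOf μ x := by
    have h1 : codeOf lam x
        = codeOf lam (i + 1) ++ codeOf (fun j => lam ((i + 1) + j)) (x - (i + 1)) := by
      conv_lhs => rw [show x = (i + 1) + (x - (i + 1)) by omega]
      exact codeOf_add lam (i + 1) (x - (i + 1))
    have hlenA : (codeOf lam (i + 1)).length = P := by
      rw [length_codeOf]; omega
    rw [h1, ← hlenA, rotate_append_length]
    have h2 : codeOf μ x
        = codeOf μ (x - (i + 1)) ++ codeOf (fun j => μ ((x - (i + 1)) + j)) (i + 1) := by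
      conv_lhs => rw [show x = (x - (i + 1)) + (i + 1) by omega]
      exact codeOf_add μ (x - (i + 1)) (i + 1)
    rw [h2]
    congr 1
    · apply codeOf_congr
      intro j hj
      show lam ((i + 1) + j) = lam ((i + 1 + j) % x)
      rw [Nat.mod_eq_of_lt (by omega)]
    · apply codeOf_congr
      intro j hj
      show lam j = lam ((i + 1 + ((x - (i + 1)) + j)) % x)
      rw [show i + 1 + ((x - (i + 1)) + j) = x + j by omega, Nat.add_mod_left,
        Nat.mod_eq_of_lt (by omega)]
  set d : List ℕ := (a.rotate r).rotate P with hddef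
  have hlen_d : d.length = n := by simp [hddef, hlen_b, hlen_a]
  have hd_ne : d ≠ [] := by
    intro hcon
    rw [hcon] at hlen_d
    simp at hlen_d
    omega
  have hcode_d : cycCode d = codeOf μ x := by
    rw [hddef, cycCode_rotate, hcode, hrotcode]
  set c0 : ℕ := d.head hd_ne with hc0def
  set e : List ℕ := d ++ [c0] with hedef
  have hlen_e : e.length = n + 1 := by simp [hedef, hlen_d]
  have hE : linCode e = codeOf μ x := by
    rw [hedef, hc0def, linCode_concat_head d hd_ne, hcode_d]
  have hmem_d : ∀ v ∈ d, 1 ≤ v ∧ v ≤ n := by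
    intro v hv
    rw [hddef, List.mem_rotate] at hv
    exact hmem_b v hv
  have hmem_e : ∀ v ∈ e, 1 ≤ v ∧ v ≤ n := by
    intro v hv
    rw [hedef, List.mem_append] at hv
    rcases hv with hv | hv
    · exact hmem_d v hv
    · simp at hv
      subst hv
      exact hmem_d _ (List.head_mem hd_ne)
  have hnodup_d : d.Nodup := by
    rw [hddef]
    exact List.nodup_rotate.mpr hnodup_b
  have hchain_ne : Chain' (· ≠ ·) e := by
    rw [hedef, Chain', List.isChain_append]
    refine ⟨List.Pairwise.isChain hnodup_d, List.isChain_singleton _, ?_⟩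
    intro p hp q hq
    simp only [head?_cons, Option.mem_def, Option.some.injEq] at hq
    subst hq
    rw [List.getLast?_eq_getLast hd_ne, Option.mem_def, Option.some.injEq] at hp
    subst hp
    rw [hc0def, List.getLast_eq_getElem, List.head_eq_getElem]
    rw [Ne, (hnodup_d.getElem_inj_iff)]
    omega
  have hsumμ : ∑ j ∈ Finset.range x, μ j = y := by
    have hl1 := length_codeOf μ x
    rw [← hcode_d, length_cycCode, hlen_d] at hl1
    omega
  -- sum in hlucky1 is over μ
  have hlucky1' : y ≤ M + ∑ j ∈ Finset.range K, μ j := hlucky1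
  -- the value c0
  have hc0N : c0 ≤ N := by
    have hPP : (∑ j ∈ Finset.range i, (1 + lam j)) + lam i + 1 = P := by
      rw [hPdef, Finset.sum_range_succ]
      omega
    rw [hPP] at hlucky2
    have hmod : P % n < n := Nat.mod_lt _ (by omega)
    rw [List.getD_eq_getElem _ _ (by rw [hlen_b]; exact hmod)] at hlucky2
    have hc0' : c0 = d[0]'(by rw [hlen_d]; omega) := by
      rw [hc0def, List.head_eq_getElem]
    rw [hc0']
    have h00 : ((a.rotate r).rotate P)[0]'(by rw [List.length_rotate, hlen_b]; omega) ≤ N := by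
      rw [List.getElem_rotate]
      refine le_of_eq_of_le (getElem_idx_congr _ ?_ _) hlucky2
      rw [hlen_b, Nat.zero_add]
    exact h00
  by_cases hKx : x ≤ K
  · -- every decreasing chunk goes into the K reversed copies
    have hE' : linCode e = codeOf μ x ++ [] := by rw [append_nil]; exact hE
    have hch := chunks_sublist n x μ e [] hmem_e hE'
    have htt : e.tail.take (x + ∑ j ∈ Finset.range x, μ j) = e.tail := by
      apply List.take_of_length_le
      simp [hlen_e]
      omega
    rw [htt] at hch
    have hrot1 : d.rotate 1 = e.tail := by
      rw [rotate_one_eq d hd_ne, hedef, ← hc0def]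
      rw [List.tail_append]
      simp [hd_ne]
    have hRK : (List.replicate x (range' 1 n).reverse).flatten <+
        (List.replicate K (range' 1 n).reverse).flatten := by
      conv_rhs => rw [show K = x + (K - x) by omega]
      rw [List.replicate_add, List.flatten_append]
      exact List.sublist_append_left _ _
    have hfin : d.rotate 1 <+
        ((List.replicate M (List.range' 1 n)).flatten ++ List.range' 1 N ++
          (List.replicate K (List.range' 1 n).reverse).flatten) := by
      refine Sublist.trans ?_ (List.sublist_append_right _ _)
      rw [hrot1]
      exact Sublist.trans hch hRK
    have heq : a.rotate (r + P + 1) = d.rotate 1 := by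
      rw [hddef, List.rotate_rotate, List.rotate_rotate, Nat.add_assoc]
    exact exists_sublist_rotate (r + P + 1) (heq ▸ hfin)
  · push_neg at hKx
    set SK : ℕ := ∑ j ∈ Finset.range K, μ j with hSKdef
    have hSK_le : SK ≤ y := by
      rw [hSKdef, ← hsumμ]
      exact Finset.sum_le_sum_of_subset (Finset.range_subset_range.mpr (by omega))
    set offK : ℕ := K + SK with hoffKdef
    have hoffK_le : offK ≤ n - 1 := by omega
    have hsplit : codeOf μ x = codeOf μ K ++ codeOf (fun j => μ (K + j)) (x - K) := by
      conv_lhs => rw [show x = K + (x - K) by omega]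
      exact codeOf_add μ K (x - K)
    have hlenA : (codeOf μ K).length = offK := by
      rw [length_codeOf, hoffKdef, hSKdef]
    -- decreasing chunks part
    have hD := chunks_sublist n K μ e (codeOf (fun j => μ (K + j)) (x - K)) hmem_e
      (by rw [hE, hsplit])
    rw [← hSKdef, ← hoffKdef] at hD
    -- increasing-runs part
    set F : List ℕ := e.drop (1 + offK) with hFdef
    have hlenF : F.length = n - offK := by
      rw [hFdef, List.length_drop, hlen_e]
      omega
    have hF_ne : F ≠ [] := by
      intro hcon
      rw [hcon] at hlenF
      simp at hlenF
      omega
    have hmem_F : ∀ v ∈ F, 1 ≤ v ∧ v ≤ n := by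
      intro v hv
      exact hmem_e v ((List.drop_sublist _ _).mem hv)
    have hFlast : ∀ w, F.getLast? = some w → w ≤ N := by
      intro w hw
      have h1 : e.getLast? = some c0 := by rw [hedef]; exact List.getLast?_concat
      have h2 : e = e.take (1 + offK) ++ F := (List.take_append_drop _ _).symm
      rw [h2, List.getLast?_append, hw] at h1
      simp at h1
      omega
    have hchainF : Chain' (· ≠ ·) F := List.IsChain.drop hchain_ne _
    have hcountF : (linCode F).count 0 ≤ M := by
      rw [hFdef, linCode_drop, hE, hsplit]
      rw [show 1 + offK = offK + 1 by omega, ← hlenA, List.drop_length_add_append]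
      have hxk : x - K = (x - K - 1) + 1 := by omega
      rw [hxk, codeOf_succ]
      simp only [List.drop_succ_cons, List.drop_zero]
      rw [List.count_append, List.count_replicate_self, count_codeOf]
      have hsum2 : (codeOf (fun j => μ (K + j)) (x - K)).count 0
          = ∑ j ∈ Finset.range (x - K), μ (K + j) := count_codeOf _ _
      have hsum3 : SK + ∑ j ∈ Finset.range (x - K), μ (K + j) = y := by
        have := count_codeOf μ x
        rw [hsplit, List.count_append, count_codeOf, count_codeOf, ← hSKdef] at this
        omega
      have hsum4 := Finset.sum_range_succ' (fun j => μ (K + j)) (x - K - 1)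
      rw [← hxk] at hsum4
      omega
    have hFsub := L5 n N F M hmem_F hchainF hFlast hcountF
    -- assemble the rotation
    have hG : d.rotate (1 + offK) = F ++ e.tail.take offK := by
      rw [List.rotate_eq_drop_append_take (by rw [hlen_d]; omega)]
      have h1 : F = d.drop (1 + offK) ++ [c0] := by
        rw [hFdef, hedef, List.drop_append_of_le_length (by rw [hlen_d]; omega)]
      have htaile : e.tail = d.tail ++ [c0] := by
        rw [hedef, List.tail_append]
        simp [List.isEmpty_iff, hd_ne]
      have h2 : e.tail.take offK = d.tail.take offK := by
        rw [htaile, List.take_append_of_le_length (by rw [List.length_tail, hlen_d]; omega)]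
      have h3 : d.take (1 + offK) = c0 :: d.tail.take offK := by
        conv_lhs => rw [← List.cons_head_tail hd_ne]
        rw [show 1 + offK = offK + 1 by omega, List.take_succ_cons, hc0def]
      rw [h1, h2, h3, List.append_assoc, List.singleton_append]
    have hGsub : d.rotate (1 + offK) <+
        ((List.replicate M (List.range' 1 n)).flatten ++ List.range' 1 N ++
          (List.replicate K (List.range' 1 n).reverse).flatten) := by
      rw [hG]
      exact Sublist.append hFsub hD
    have heq : a.rotate (r + P + (1 + offK)) = d.rotate (1 + offK) := by
      rw [hddef, List.rotate_rotate, List.rotate_rotate, Nat.add_assoc]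
    exact exists_sublist_rotate (r + P + (1 + offK)) (heq ▸ hGsub)
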